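/- arXiv:1107.5520 — 5 statements merged into one kernel-verified Lean document; each statement's English description precedes it below -/
import Mathlib

section
/- Let Z ⊆ ℝ^m be a rational decision maker: (1) every x ∈ ℝ^m satisfies x ∈ Z or -x ∈ Z; (2) Z is closed under addition and nonnegative scalar multiplication; (3) every componentwise nonnegative x is in Z, and no componentwise strictly negative x is in Z. Then there exist numbers p_i ≥ 0, not all zero, such that {x : Σ_i x_i p_i > 0} ⊆ Z ⊆ {x : Σ_i x_i p_i ≥ 0}. -/
/-- A rational decision maker `Z ⊆ ℝ^m` (complete, conic, monotone)
is separated by a nonzero nonnegative vector `p`: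
`{x : Σ x_i p_i > 0} ⊆ Z ⊆ {x : Σ x_i p_i ≥ 0}`. -/
theorem rational_decision_maker_probabilities (m : ℕ) (Z : Set (Fin m → ℝ))
    (h_complete : ∀ x : Fin m → ℝ, x ∈ Z ∨ -x ∈ Z)
    (h_cone : ∀ x ∈ Z, ∀ y ∈ Z, ∀ lam gam : ℝ, 0 ≤ lam → 0 ≤ gam →
      lam • x + gam • y ∈ Z)
    (h_pos : ∀ x : Fin m → ℝ, (∀ i, 0 ≤ x i) → x ∈ Z)
    (h_neg : ∀ x : Fin m → ℝ, (∀ i, x i < 0) → x ∉ Z) :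
    ∃ p : Fin m → ℝ, (∀ i, 0 ≤ p i) ∧ p ≠ 0 ∧
      {x : Fin m → ℝ | 0 < ∑ i, x i * p i} ⊆ Z ∧
      Z ⊆ {x : Fin m → ℝ | 0 ≤ ∑ i, x i * p i} := by
  classical
  rcases Nat.eq_zero_or_pos m with hm | hm
  · subst hm
    exact absurd (h_pos 0 fun i => le_rfl) (h_neg 0 fun i => i.elim0)
  -- The open convex set of strictly negative vectors
  set N : Set (Fin m → ℝ) := {x | ∀ i, x i < 0} with hN
  have hNopen : IsOpen N := by
    have : N = Set.pi Set.univ (fun _ : Fin m => Set.Iio (0 : ℝ)) := by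
      ext x; simp [hN, Set.mem_pi]
    rw [this]
    exact isOpen_set_pi Set.finite_univ (fun i _ => isOpen_Iio)
  have hNconv : Convex ℝ N := by
    intro x hx y hy a b ha hb hab
    intro i
    have hxi := hx i
    have hyi := hy i
    have : (a • x + b • y) i = a * x i + b * y i := by simp
    rw [this]
    rcases eq_or_lt_of_le ha with ha' | ha'
    · rcases eq_or_lt_of_le hb with hb' | hb'
      · exfalso; rw [← ha', ← hb'] at hab; norm_num at hab
      · nlinarith
    · nlinarith
  have hZconv : Convex ℝ Z := fun x hx y hy a b ha hb _ => h_cone x hx y hy a b ha hb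
  have hdisj : Disjoint N Z := Set.disjoint_left.mpr fun x hxN hxZ => h_neg x hxN hxZ
  obtain ⟨f, u, hfN, hfZ⟩ := geometric_hahn_banach_open hNconv hNopen hZconv hdisj
  have h0Z : (0 : Fin m → ℝ) ∈ Z := h_pos 0 fun i => le_rfl
  have hu0 : u ≤ 0 := by simpa using hfZ 0 h0Z
  -- f is nonnegative on Z
  have hZnn : ∀ b ∈ Z, 0 ≤ f b := by
    intro b hb
    by_contra h
    push_neg at h
    set lam : ℝ := (u - 1) / f b with hlam
    have hfb : f b ≠ 0 := ne_of_lt h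
    have hlamnn : 0 ≤ lam := div_nonneg_of_nonpos (by linarith) (le_of_lt h)
    have hmem : lam • b ∈ Z := by
      have := h_cone b hb b hb lam 0 hlamnn le_rfl
      simpa using this
    have := hfZ _ hmem
    rw [map_smul] at this
    simp only [smul_eq_mul] at this
    rw [hlam, div_mul_cancel₀ _ hfb] at this
    linarith
  -- the vector p
  set p : Fin m → ℝ := fun i => f (fun j => if i = j then 1 else 0) with hp
  have hkey : ∀ x : Fin m → ℝ, f x = ∑ i, x i * p i := by
    intro x
    conv_lhs => rw [pi_eq_sum_univ x]
    rw [map_sum]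
    refine Finset.sum_congr rfl fun i _ => ?_
    rw [map_smul]
    simp [hp]
  have hpnn : ∀ i, 0 ≤ p i := by
    intro i
    exact hZnn _ (h_pos _ fun j => by by_cases h : i = j <;> simp [h])
  have hpne : p ≠ 0 := by
    intro hp0
    have hN1 : (fun _ : Fin m => (-1 : ℝ)) ∈ N := fun i => by norm_num
    have h1 := hfN _ hN1
    have h2 : f (fun _ : Fin m => (-1 : ℝ)) = 0 := by
      rw [hkey]
      simp [hp0]
    rw [h2] at h1
    linarith
  refine ⟨p, hpnn, hpne, ?_, ?_⟩
  · intro x hx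
    simp only [Set.mem_setOf_eq] at hx
    rcases h_complete x with h | h
    · exact h
    · exfalso
      have := hZnn _ h
      rw [map_neg, hkey] at this
      linarith
  · intro x hx
    have := hZnn x hx
    rwa [hkey] at this
end

section
/- Let Z ⊆ ℝ^m be a rational decision maker (as in the finite-event rationality axioms), and suppose additionally that the all-ones contract (1,...,1) is assigned expectation 1, i.e. we normalize Σ_i p_i = 1. Then the vector p = (p_1,...,p_m) with p_i ≥ 0, Σ p_i = 1 satisfying {x : Σ x_i p_i > 0} ⊆ Z ⊆ {x : Σ x_i p_i ≥ 0} is unique. -/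
/-- Uniqueness of the normalized probability vector representing a
rational decision maker `Z ⊆ ℝ^m`. -/
theorem rational_decision_maker_probabilities_unique (m : ℕ) (Z : Set (Fin m → ℝ))
    (h_complete : ∀ x : Fin m → ℝ, x ∈ Z ∨ -x ∈ Z)
    (h_cone : ∀ x ∈ Z, ∀ y ∈ Z, ∀ lam gam : ℝ, 0 ≤ lam → 0 ≤ gam →
      lam • x + gam • y ∈ Z)
    (h_pos : ∀ x : Fin m → ℝ, (∀ i, 0 ≤ x i) → x ∈ Z)
    (h_neg : ∀ x : Fin m → ℝ, (∀ i, x i < 0) → x ∉ Z)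
    (p q : Fin m → ℝ)
    (hp0 : ∀ i, 0 ≤ p i) (hp1 : ∑ i, p i = 1)
    (hpZ : {x : Fin m → ℝ | 0 < ∑ i, x i * p i} ⊆ Z)
    (hZp : Z ⊆ {x : Fin m → ℝ | 0 ≤ ∑ i, x i * p i})
    (hq0 : ∀ i, 0 ≤ q i) (hq1 : ∑ i, q i = 1)
    (hqZ : {x : Fin m → ℝ | 0 < ∑ i, x i * q i} ⊆ Z)
    (hZq : Z ⊆ {x : Fin m → ℝ | 0 ≤ ∑ i, x i * q i}) :
    p = q := by
  have key : ∀ (a b : Fin m → ℝ), (∀ i, 0 ≤ a i) → (∑ i, a i = 1) →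
      (∀ i, 0 ≤ b i) → (∑ i, b i = 1) →
      ({x : Fin m → ℝ | 0 < ∑ i, x i * a i} ⊆ Z) →
      (Z ⊆ {x : Fin m → ℝ | 0 ≤ ∑ i, x i * b i}) →
      ∀ x : Fin m → ℝ, (∑ i, x i * a i) ≤ ∑ i, x i * b i := by
    intro a b ha0 ha1 hb0 hb1 haZ hZb x
    by_contra h
    push_neg at h
    set A := ∑ i, x i * a i
    set B := ∑ i, x i * b i
    set c := (A + B) / 2 with hc
    set y : Fin m → ℝ := fun i => x i - c with hy
    have hya : ∑ i, y i * a i = A - c := by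
      simp only [hy, sub_mul, Finset.sum_sub_distrib, ← Finset.mul_sum, ha1]
      ring
    have hyb : ∑ i, y i * b i = B - c := by
      simp only [hy, sub_mul, Finset.sum_sub_distrib, ← Finset.mul_sum, hb1]
      ring
    have h1 : 0 < ∑ i, y i * a i := by rw [hya]; simp only [hc]; linarith
    have h2 : 0 ≤ ∑ i, y i * b i := hZb (haZ h1)
    rw [hyb] at h2; simp only [hc] at h2; linarith
  have h1 := key p q hp0 hp1 hq0 hq1 hpZ hZq
  have h2 := key q p hq0 hq1 hp0 hp1 hqZ hZp
  have heq : ∀ x : Fin m → ℝ, (∑ i, x i * p i) = ∑ i, x i * q i :=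
    fun x => le_antisymm (h1 x) (h2 x)
  funext i
  have := heq (Pi.single i 1)
  simpa [Pi.single_apply, Finset.sum_ite_eq'] using this
end

section
/- Let Z ⊆ ℝ^m be a convex cone such that Z ∪ (-Z) = ℝ^m and Z ≠ ℝ^m. Then the closure of Z is a closed half-space through the origin: there exists a nonzero linear functional f on ℝ^m with closure(Z) = {x : f(x) ≥ 0}. -/
/-- A convex cone `Z ⊆ ℝ^m` with `Z ∪ (-Z) = ℝ^m` and `Z ≠ ℝ^m`
has closure equal to a closed half-space through the origin. -/
theorem closure_of_complete_cone_is_halfspace (m : ℕ) (Z : Set (Fin m → ℝ))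
    (h_add : ∀ x ∈ Z, ∀ y ∈ Z, x + y ∈ Z)
    (h_smul : ∀ x ∈ Z, ∀ lam : ℝ, 0 ≤ lam → lam • x ∈ Z)
    (h_cover : Z ∪ (-Z) = Set.univ)
    (h_proper : Z ≠ Set.univ) :
    ∃ f : (Fin m → ℝ) →ₗ[ℝ] ℝ, f ≠ 0 ∧
      closure Z = {x : Fin m → ℝ | 0 ≤ f x} := by
  classical
  -- every point is in Z or -Z
  have hcov : ∀ x : Fin m → ℝ, x ∈ Z ∨ -x ∈ Z := by
    intro x
    have : x ∈ Z ∪ (-Z) := h_cover ▸ Set.mem_univ x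
    rcases this with h | h
    · exact Or.inl h
    · exact Or.inr h
  -- Z is nonempty: 0 ∈ Z
  have h0 : (0 : Fin m → ℝ) ∈ Z := by
    rcases hcov 0 with h | h
    · exact h
    · simpa using h
  -- Z is convex
  have hconv : Convex ℝ Z := by
    intro x hx y hy a b ha hb _
    exact h_add _ (h_smul _ hx a ha) _ (h_smul _ hy b hb)
  -- closure Z ≠ univ
  have hclne : closure Z ≠ Set.univ := by
    intro hcl
    apply h_proper
    have hspan : affineSpan ℝ Z = ⊤ := by
      have hclosed : IsClosed ((affineSpan ℝ Z : AffineSubspace ℝ (Fin m → ℝ)) :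
          Set (Fin m → ℝ)) := AffineSubspace.closed_of_finiteDimensional _
      have : closure Z ⊆ (affineSpan ℝ Z : Set (Fin m → ℝ)) :=
        closure_minimal (subset_affineSpan ℝ Z) hclosed
      rw [hcl] at this
      rw [eq_top_iff]
      exact fun p _ => this (Set.mem_univ p)
    obtain ⟨y, hy⟩ := hconv.interior_nonempty_iff_affineSpan_eq_top.2 hspan
    ext x
    simp only [Set.mem_univ, iff_true]
    have hz : (2 : ℝ) • x - y ∈ closure Z := by rw [hcl]; trivial
    have : (1/2 : ℝ) • y + (1/2 : ℝ) • ((2 : ℝ) • x - y) ∈ interior Z :=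
      hconv.combo_interior_closure_mem_interior hy hz (by norm_num) (by norm_num)
        (by norm_num)
    have hx : (1/2 : ℝ) • y + (1/2 : ℝ) • ((2 : ℝ) • x - y) = x := by
      module
    rw [hx] at this
    exact interior_subset this
  -- pick a point b outside the closure and separate
  obtain ⟨b, hb⟩ : ∃ b, b ∉ closure Z := by
    by_contra h
    push_neg at h
    exact hclne (Set.eq_univ_of_forall h)
  obtain ⟨f, u, hfu, hub⟩ :=
    geometric_hahn_banach_closed_point (hconv.closure) isClosed_closure hb
  have hu0 : 0 < u := hfu 0 (subset_closure h0) |>.trans_le' (by simp)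
  -- f ≤ 0 on Z
  have hfle : ∀ x ∈ Z, f x ≤ 0 := by
    intro x hx
    by_contra h
    push_neg at h
    have ht : (0 : ℝ) ≤ (u + 1) / f x := by positivity
    have := hfu (((u + 1) / f x) • x) (subset_closure (h_smul _ hx _ ht))
    rw [map_smul, smul_eq_mul, div_mul_cancel₀ _ (ne_of_gt h)] at this
    linarith
  have hfb : 0 < f b := hu0.trans hub
  refine ⟨-(f : (Fin m → ℝ) →ₗ[ℝ] ℝ), ?_, ?_⟩
  · intro h
    have : (-(f : (Fin m → ℝ) →ₗ[ℝ] ℝ)) b = 0 := by rw [h]; rfl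
    simp only [LinearMap.neg_apply, ContinuousLinearMap.coe_coe, neg_eq_zero] at this
    linarith
  · apply Set.Subset.antisymm
    · -- closure Z ⊆ {x | 0 ≤ -f x}
      have : closure Z ⊆ {x : Fin m → ℝ | f x ≤ 0} := by
        apply closure_minimal _ (isClosed_le (f.continuous) continuous_const)
        intro x hx
        exact hfle x hx
      intro x hx
      have := this hx
      simpa using this
    · intro x hx
      simp only [Set.mem_setOf_eq, LinearMap.neg_apply, ContinuousLinearMap.coe_coe] at hx
      -- 0 ≤ -f x, i.e. f x ≤ 0
      have hfx : f x ≤ 0 := by linarith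
      rcases lt_or_eq_of_le hfx with hlt | heq
      · -- f x < 0 : x ∈ Z
        rcases hcov x with h | h
        · exact subset_closure h
        · exact absurd (hfle _ h) (by simp; linarith)
      · -- f x = 0 : approximate by x - ε • b
        have hmem : ∀ ε : ℝ, 0 < ε → x - ε • b ∈ Z := by
          intro ε hε
          rcases hcov (x - ε • b) with h | h
          · exact h
          · exfalso
            have := hfle _ h
            simp only [map_neg, map_sub, map_smul, smul_eq_mul, ← heq] at this
            nlinarith
        have h1 : Filter.Tendsto (fun n : ℕ => (1 / (n + 1) : ℝ)) Filter.atTop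
            (nhds 0) := tendsto_one_div_add_atTop_nhds_zero_nat
        have h2 := (h1.smul_const b)
        have h3 := h2.const_sub x
        rw [zero_smul, sub_zero] at h3
        exact mem_closure_of_tendsto h3
          (Filter.Eventually.of_forall fun n : ℕ => hmem _ (by positivity))
end

section
/- Let M be a countable class of environments, each policy π and environment ν having value V_ν^π ∈ ℝ with 0 < V_ν^* := sup_π V_ν^π < ∞, so each contract sequence (V_ν^π)_ν lies in the weighted space X = ℓ^∞(1/V^*) with ‖(V_ν^π)_ν‖_X ≤ 1. If w_ν ≥ 0 satisfy Σ_ν w_ν V_ν^* < ∞, then x ↦ Σ_ν w_ν x_ν defines a positive continuous linear functional on X; and if π* maximizes Σ_ν w_ν V_ν^π over policies, then for every policy π with Σ_ν w_ν V_ν^π < Σ_ν w_ν V_ν^{π*}, the contract (V_ν^{π*} - V_ν^π)_ν has strictly positive value under this functional, hence is acceptable and not rejectable. -/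
/-- With a countable class of environments (indexed by `ℕ`),
values `0 ≤ V π ν ≤ V* ν`, `0 < V* ν`, each contract sequence `(V π ν)_ν` lies
in `X = ℓ^∞(1/V*)` with norm `≤ 1`; weights `w ≥ 0` with `Σ w ν * V* ν < ∞`
define a positive continuous linear functional `x ↦ Σ' w ν * x ν` on `X`; and
if `π*` maximizes `Σ' w ν * V π ν`, then for any policy `π` with strictly
smaller weighted value, the contract `(V π* ν - V π ν)_ν` has strictly positive
value under this functional (acceptable and not rejectable). -/
theorem aixi_agent_rational (P : Type*)
    (V : P → ℕ → ℝ) (Vstar : ℕ → ℝ)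
    (hV0 : ∀ π ν, 0 ≤ V π ν) (hVs : ∀ ν, 0 < Vstar ν)
    (hle : ∀ π ν, V π ν ≤ Vstar ν)
    (w : ℕ → ℝ) (hw : ∀ ν, 0 ≤ w ν)
    (hsum : Summable (fun ν => w ν * Vstar ν)) :
    -- each contract sequence lies in `X = ℓ^∞(1/V*)` with norm at most 1
    (∀ π ν, |V π ν| / Vstar ν ≤ 1) ∧
    -- `x ↦ Σ' w ν * x ν` is well defined and bounded on `X`
    (∀ (x : ℕ → ℝ) (C : ℝ), (∀ ν, |x ν| ≤ C * Vstar ν) →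
      Summable (fun ν => w ν * x ν) ∧
        |∑' ν, w ν * x ν| ≤ C * ∑' ν, w ν * Vstar ν) ∧
    -- positivity of the functional
    (∀ x : ℕ → ℝ, (∃ C : ℝ, ∀ ν, |x ν| ≤ C * Vstar ν) →
      (∀ ν, 0 ≤ x ν) → 0 ≤ ∑' ν, w ν * x ν) ∧
    -- the AIXI policy `π*` is strictly preferred to strictly worse policies
    (∀ πstar : P, (∀ π, ∑' ν, w ν * V π ν ≤ ∑' ν, w ν * V πstar ν) →
      ∀ π : P, ∑' ν, w ν * V π ν < ∑' ν, w ν * V πstar ν →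
        0 < ∑' ν, w ν * (V πstar ν - V π ν)) := by

  have key : ∀ (x : ℕ → ℝ) (C : ℝ), (∀ ν, |x ν| ≤ C * Vstar ν) →
      Summable (fun ν => w ν * x ν) ∧
        |∑' ν, w ν * x ν| ≤ C * ∑' ν, w ν * Vstar ν := by
    intro x C hx
    have hbound : ∀ ν, |w ν * x ν| ≤ C * (w ν * Vstar ν) := by
      intro ν
      rw [abs_mul, abs_of_nonneg (hw ν)]
      calc w ν * |x ν| ≤ w ν * (C * Vstar ν) :=
            mul_le_mul_of_nonneg_left (hx ν) (hw ν)
        _ = C * (w ν * Vstar ν) := by ring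
    have hS : Summable (fun ν => w ν * x ν) := by
      apply Summable.of_abs
      exact Summable.of_nonneg_of_le (fun ν => abs_nonneg _) hbound
        (hsum.mul_left C)
    refine ⟨hS, ?_⟩
    have habs : Summable (fun ν => ‖w ν * x ν‖) := by
      simp only [Real.norm_eq_abs]; exact hS.abs
    calc |∑' ν, w ν * x ν| ≤ ∑' ν, |w ν * x ν| := by
          have := norm_tsum_le_tsum_norm habs
          simp only [Real.norm_eq_abs] at this; exact this
      _ ≤ ∑' ν, C * (w ν * Vstar ν) := by
          exact Summable.tsum_le_tsum hbound (hS.abs) (hsum.mul_left C)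
      _ = C * ∑' ν, w ν * Vstar ν := tsum_mul_left
  refine ⟨?_, key, ?_, ?_⟩
  · intro π ν
    rw [div_le_one (hVs ν), abs_of_nonneg (hV0 π ν)]
    exact hle π ν
  · intro x _ hx0
    exact tsum_nonneg (fun ν => mul_nonneg (hw ν) (hx0 ν))
  · intro πstar _ π hlt
    have hSp : Summable (fun ν => w ν * V π ν) :=
      (key (V π) 1 (by
        intro ν; rw [one_mul, abs_of_nonneg (hV0 π ν)]; exact hle π ν)).1
    have hSs : Summable (fun ν => w ν * V πstar ν) :=
      (key (V πstar) 1 (by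
        intro ν; rw [one_mul, abs_of_nonneg (hV0 πstar ν)]; exact hle πstar ν)).1
    have : (∑' ν, w ν * (V πstar ν - V π ν)) =
        (∑' ν, w ν * V πstar ν) - ∑' ν, w ν * V π ν := by
      simp_rw [mul_sub]
      exact Summable.tsum_sub hSs hSp
    rw [this]
    linarith
end

section
/- Let M be a countable class of environments with prior weights p_{ν,0} > 0 summing over M to a finite value, and at each time k let p_{ν,k} = p_{ν,0} · I(h_k,ν) / Σ_μ p_{μ,0} I(h_k,μ) where I(h_k,ν) ∈ {0,1} indicates consistency of ν with the history h_k (so p_{μ,k} ≥ p_{μ,0} > 0 for the true environment μ, which is always consistent). Suppose relative values W_{ν,k}^π ∈ [0,1] are given, and there exist policies π_k with W_{ν,k}^{π_k} → 1 as k → ∞ for every ν consistent with the history. Let π^p at time k maximize Σ_ν p_{ν,k} W_{ν,k}^π. Then W_{μ,k}^{π^p} → 1 as k → ∞, where μ is the actual environment. -/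
open Filter

/-- Asymptotic optimality: Environments are indexed by `ℕ`, `μ`
is the true environment, `cons ν k ∈ {0,1}` indicates consistency of `ν` with
the history at time `k` (monotone in `k`, with `μ` always consistent).  The
posterior weights are `p k ν = p₀ ν * cons ν k / Σ' μ', p₀ μ' * cons μ' k`.
If there are policies `π_k` with `W (π_k) ν k → 1` for every forever-consistent
`ν`, and `πp k` maximizes `Σ' ν, p k ν * W π ν k`, then `W (πp k) μ k → 1`. -/
theorem asymptotic_optimality (P : Type*)
    (W : P → ℕ → ℕ → ℝ)
    (hW0 : ∀ π ν k, 0 ≤ W π ν k) (hW1 : ∀ π ν k, W π ν k ≤ 1)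
    (μ : ℕ)
    (p0 : ℕ → ℝ) (hp0 : ∀ ν, 0 < p0 ν) (hp0sum : Summable p0)
    (cons : ℕ → ℕ → ℝ)
    (hcons01 : ∀ ν k, cons ν k = 0 ∨ cons ν k = 1)
    (hconsmono : ∀ ν k, cons ν (k + 1) ≤ cons ν k)
    (hconsμ : ∀ k, cons μ k = 1)
    (p : ℕ → ℕ → ℝ)
    (hp : ∀ k ν, p k ν = p0 ν * cons ν k / ∑' ν', p0 ν' * cons ν' k)
    (πk : ℕ → P)
    (hπk : ∀ ν, (∀ k, cons ν k = 1) →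
      Tendsto (fun k => W (πk k) ν k) atTop (nhds 1))
    (πp : ℕ → P)
    (hπp : ∀ k (π : P), ∑' ν, p k ν * W π ν k ≤ ∑' ν, p k ν * W (πp k) ν k) :
    Tendsto (fun k => W (πp k) μ k) atTop (nhds 1) := by
  have hcons0 : ∀ ν k, 0 ≤ cons ν k := by
    intro ν k; rcases hcons01 ν k with h | h <;> simp [h]
  have hcons1 : ∀ ν k, cons ν k ≤ 1 := by
    intro ν k; rcases hcons01 ν k with h | h <;> simp [h]
  set Z : ℕ → ℝ := fun k => ∑' ν', p0 ν' * cons ν' k with hZ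
  have hsumZ : ∀ k, Summable (fun ν => p0 ν * cons ν k) :=
    fun k => hp0sum.of_nonneg_of_le
      (fun ν => mul_nonneg (hp0 ν).le (hcons0 ν k))
      (fun ν => by nlinarith [hp0 ν, hcons1 ν k, hcons0 ν k])
  have hZge : ∀ k, p0 μ ≤ Z k := by
    intro k
    have := Summable.le_tsum (hsumZ k) μ (fun i _ => mul_nonneg (hp0 i).le (hcons0 i k))
    simpa [hconsμ k] using this
  have hZpos : ∀ k, 0 < Z k := fun k => lt_of_lt_of_le (hp0 μ) (hZge k)
  have hconsanti : ∀ ν, Antitone (cons ν) :=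
    fun ν => antitone_nat_of_succ_le (hconsmono ν)
  have hZle : ∀ k, Z k ≤ Z 0 := fun k =>
    Summable.tsum_le_tsum
      (fun ν => mul_le_mul_of_nonneg_left (hconsanti ν (Nat.zero_le k)) (hp0 ν).le)
      (hsumZ k) (hsumZ 0)
  have hpnonneg : ∀ k ν, 0 ≤ p k ν := by
    intro k ν; rw [hp k ν]
    exact div_nonneg (mul_nonneg (hp0 ν).le (hcons0 ν k)) (hZpos k).le
  have hpbound : ∀ k ν, p k ν ≤ p0 ν / p0 μ := by
    intro k ν; rw [hp k ν]
    apply div_le_div₀ (hp0 ν).le _ (hp0 μ) (hZge k)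
    nlinarith [hcons1 ν k, hp0 ν]
  set c : ℝ := p0 μ / Z 0 with hc
  have hcpos : 0 < c := div_pos (hp0 μ) (hZpos 0)
  have hpμ : ∀ k, c ≤ p k μ := by
    intro k; rw [hp k μ, hconsμ k, mul_one, hc]
    exact div_le_div_of_nonneg_left (hp0 μ).le (hZpos k) (hZle k)
  -- dominating function
  set g : ℕ → ℝ := fun ν => p0 ν / p0 μ with hg
  have hgsum : Summable g := hp0sum.div_const _
  have hgnonneg : ∀ ν, 0 ≤ g ν := fun ν => div_nonneg (hp0 ν).le (hp0 μ).le
  -- summability of various series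
  have hsummul : ∀ k (f : ℕ → ℝ), (∀ ν, 0 ≤ f ν) → (∀ ν, f ν ≤ 1) →
      Summable (fun ν => p k ν * f ν) := by
    intro k f hf0 hf1
    apply hgsum.of_nonneg_of_le (fun ν => mul_nonneg (hpnonneg k ν) (hf0 ν))
    intro ν
    calc p k ν * f ν ≤ p k ν * 1 :=
          mul_le_mul_of_nonneg_left (hf1 ν) (hpnonneg k ν)
      _ = p k ν := mul_one _
      _ ≤ g ν := hpbound k ν
  have hsump : ∀ k, Summable (fun ν => p k ν) := by
    intro k
    have := hsummul k (fun _ => 1) (fun _ => zero_le_one) (fun _ => le_rfl)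
    simpa using this
  -- Δ k
  set D : ℕ → ℕ → ℝ := fun k ν => p k ν * (1 - W (πk k) ν k) with hD
  have hDnonneg : ∀ k ν, 0 ≤ D k ν :=
    fun k ν => mul_nonneg (hpnonneg k ν) (by linarith [hW1 (πk k) ν k])
  have hDtend : ∀ ν, Tendsto (fun k => D k ν) atTop (nhds 0) := by
    intro ν
    by_cases hall : ∀ k, cons ν k = 1
    · have h1 : Tendsto (fun k => 1 - W (πk k) ν k) atTop (nhds 0) := by
        have := (tendsto_const_nhds (x := (1:ℝ)) (f := atTop)).sub (hπk ν hall)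
        simpa using this
      apply squeeze_zero (fun k => hDnonneg k ν)
        (g := fun k => g ν * (1 - W (πk k) ν k))
      · intro k
        exact mul_le_mul_of_nonneg_right (hpbound k ν)
          (by linarith [hW1 (πk k) ν k])
      · simpa using h1.const_mul (g ν)
    · push_neg at hall
      obtain ⟨K, hK⟩ := hall
      have hK0 : cons ν K = 0 := (hcons01 ν K).resolve_right hK
      have hzero : ∀ k ≥ K, D k ν = 0 := by
        intro k hk
        have h1 : cons ν k ≤ 0 := hK0 ▸ hconsanti ν hk
        have h2 : cons ν k = 0 := le_antisymm h1 (hcons0 ν k)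
        simp [hD, hp k ν, h2]
      apply Tendsto.congr' (EventuallyEq.symm _) tendsto_const_nhds
      filter_upwards [eventually_ge_atTop K] with k hk using hzero k hk
  have hDbound : ∀ k ν, ‖D k ν‖ ≤ g ν := by
    intro k ν
    rw [Real.norm_eq_abs, abs_of_nonneg (hDnonneg k ν)]
    calc D k ν ≤ p k ν * 1 := mul_le_mul_of_nonneg_left
          (by linarith [hW0 (πk k) ν k]) (hpnonneg k ν)
      _ = p k ν := mul_one _
      _ ≤ g ν := hpbound k ν
  have hΔ : Tendsto (fun k => ∑' ν, D k ν) atTop (nhds 0) := by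
    have := tendsto_tsum_of_dominated_convergence (f := D) (g := fun _ => 0)
      hgsum hDtend (Eventually.of_forall hDbound)
    simpa using this
  -- key inequality: c * (1 - W (πp k) μ k) ≤ Δ k
  have hkey : ∀ k, 1 - W (πp k) μ k ≤ (∑' ν, D k ν) / c := by
    intro k
    rw [le_div_iff₀ hcpos]
    have hsum1 : Summable (fun ν => p k ν * W (πp k) ν k) :=
      hsummul k _ (fun ν => hW0 _ ν k) (fun ν => hW1 _ ν k)
    have hsum2 : Summable (fun ν => p k ν * W (πk k) ν k) :=
      hsummul k _ (fun ν => hW0 _ ν k) (fun ν => hW1 _ ν k)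
    have hsumD1 : Summable (fun ν => p k ν * (1 - W (πp k) ν k)) := by
      have := (hsump k).sub hsum1
      simpa [mul_sub] using this
    have e1 : ∑' ν, p k ν * (1 - W (πp k) ν k)
        = (∑' ν, p k ν) - ∑' ν, p k ν * W (πp k) ν k := by
      rw [← Summable.tsum_sub (hsump k) hsum1]
      congr 1; funext ν; ring
    have e2 : ∑' ν, D k ν
        = (∑' ν, p k ν) - ∑' ν, p k ν * W (πk k) ν k := by
      rw [← Summable.tsum_sub (hsump k) hsum2]
      congr 1; funext ν; simp [hD]; ring
    have h3 : ∑' ν, p k ν * (1 - W (πp k) ν k) ≤ ∑' ν, D k ν := by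
      rw [e1, e2]; linarith [hπp k (πk k)]
    have h4 : p k μ * (1 - W (πp k) μ k) ≤ ∑' ν, p k ν * (1 - W (πp k) ν k) :=
      Summable.le_tsum hsumD1 μ
        (fun i _ => mul_nonneg (hpnonneg k i) (by linarith [hW1 (πp k) i k]))
    have h5 : (1 - W (πp k) μ k) * c ≤ p k μ * (1 - W (πp k) μ k) := by
      rw [mul_comm]
      exact mul_le_mul_of_nonneg_right (hpμ k) (by linarith [hW1 (πp k) μ k])
    linarith
  have hsq : Tendsto (fun k => 1 - W (πp k) μ k) atTop (nhds 0) := by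
    apply squeeze_zero (fun k => by linarith [hW1 (πp k) μ k]) hkey
    simpa using hΔ.div_const c
  have := (tendsto_const_nhds (x := (1:ℝ)) (f := atTop)).sub hsq
  simpa using this
end
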